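/- For every ε ∈ (0,1), every process on I_ε with Σ_{i ∈ I_ε} p_i^1 = 1, and every step t, one has W_{t+1} ≤ (1 + 1/B_ε³) · W_t + 2ε. -/

import Mathlib

/-- `B_ε := 2⌈log₂(1/ε)⌉ + 1`. -/
noncomputable def Bval (ε : ℝ) : ℤ := 2 * ⌈Real.logb 2 (1 / ε)⌉ + 1

/-- `I_ε`: the odd integers `i` with `-B_ε ≤ i ≤ B_ε`. -/
noncomputable def Iset (ε : ℝ) : Finset ℤ :=
  (Finset.Icc (-(Bval ε)) (Bval ε)).filter (fun i => Odd i)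

/-- `I_ε⁺ := I_ε ∩ {i > 0}`. -/
noncomputable def Ipos (ε : ℝ) : Finset ℤ := (Iset ε).filter (fun i => 0 < i)

/-- `I_ε⁻ := I_ε ∩ {i < 0}`. -/
noncomputable def Ineg (ε : ℝ) : Finset ℤ := (Iset ε).filter (fun i => i < 0)

/-- A process on `I_ε` (Definition 4 of the paper): at each step `t ≥ 1` and each `i ∈ I_ε`,
an amount `q t i` with `0 ≤ q t i ≤ p t i` of the weight `p t i` moves to position `i - 2`
and the remaining `p t i - q t i` moves to position `i + 2`, clamped to stay in `[-B_ε, B_ε]`;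
`p (t+1) i` is the total weight arriving at `i`.  Moreover:
(i) at every step at least `15/16` of the mass on `I_ε⁺` moves down, and
(ii) for every `i ∈ I_ε⁻` whose mass is at least `(1/B_ε⁴) Σ_{j ∈ I_ε⁺} p t j`,
at most `1/16` of the weight at `i` moves up. -/
structure MProcess (ε : ℝ) where
  p : ℕ → ℤ → ℝ
  q : ℕ → ℤ → ℝ
  q_nonneg : ∀ t i, 0 ≤ q t i
  q_le_p : ∀ t i, q t i ≤ p t i
  update : ∀ t, 1 ≤ t → ∀ i ∈ Iset ε,
    p (t + 1) i =
      (∑ j ∈ (Iset ε).filter (fun j => max (j - 2) (-(Bval ε)) = i), q t j) +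
      (∑ j ∈ (Iset ε).filter (fun j => min (j + 2) (Bval ε) = i), (p t j - q t j))
  mass_down : ∀ t, 1 ≤ t →
    (15 / 16 : ℝ) * ∑ i ∈ Ipos ε, p t i ≤ ∑ i ∈ Ipos ε, q t i
  up_small : ∀ t, 1 ≤ t → ∀ i ∈ Ineg ε,
    (1 / (Bval ε : ℝ) ^ 4) * (∑ j ∈ Ipos ε, p t j) ≤ p t i →
    p t i - q t i ≤ (1 / 16 : ℝ) * p t i

/-- `W_t := Σ_{i ∈ I_ε⁻} 2^i p_i^t + Σ_{i ∈ I_ε⁺} p_i^t`. -/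
noncomputable def Wfun (ε : ℝ) (P : MProcess ε) (t : ℕ) : ℝ :=
  (∑ i ∈ Ineg ε, (2 : ℝ) ^ i * P.p t i) + ∑ i ∈ Ipos ε, P.p t i

/-- weight function -/
noncomputable def phiW (i : ℤ) : ℝ := if i < 0 then (2:ℝ)^i else 1

lemma phiW_pos (i : ℤ) : 0 < phiW i := by
  unfold phiW; split <;> positivity

lemma phiW_le_one (i : ℤ) : phiW i ≤ 1 := by
  unfold phiW; split
  · calc (2:ℝ)^i ≤ (2:ℝ)^(0:ℤ) := zpow_le_zpow_right₀ one_le_two (by omega)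
      _ = 1 := by norm_num
  · exact le_refl 1

lemma phiW_neg (i : ℤ) (h : i < 0) : phiW i = (2:ℝ)^i := if_pos h

lemma phiW_pos' (i : ℤ) (h : 0 < i) : phiW i = 1 := if_neg (by omega)


set_option maxHeartbeats 1600000 in
/-- equation (8) of the paper: for every `ε ∈ (0,1)`, every process on `I_ε`
with initial total mass `1`, and every step `t ≥ 1`, `W_{t+1} ≤ (1 + 1/B_ε³) W_t + 2ε`. -/
theorem stmt1 :
    ∀ ε : ℝ, ε ∈ Set.Ioo (0 : ℝ) 1 →
      ∀ P : MProcess ε, (∑ i ∈ Iset ε, P.p 1 i) = 1 →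
        ∀ t : ℕ, 1 ≤ t →
          Wfun ε P (t + 1) ≤ (1 + 1 / (Bval ε : ℝ) ^ 3) * Wfun ε P t + 2 * ε := by
  intro ε hε P hmass t ht
  obtain ⟨hε0, hε1⟩ := hε
  set B : ℤ := Bval ε with hBdef
  set b : ℤ := ⌈Real.logb 2 (1 / ε)⌉ with hbdef
  have hBeq : B = 2*b + 1 := rfl
  have hb1 : 1 ≤ b := by
    have : (0:ℝ) < Real.logb 2 (1/ε) :=
      Real.logb_pos (by norm_num) (one_lt_one_div hε0 hε1)
    have := Int.ceil_pos.mpr this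
    omega
  have hB3 : 3 ≤ B := by omega
  have hBR : (3:ℝ) ≤ (B:ℝ) := by exact_mod_cast hB3
  have hBR0 : (0:ℝ) < (B:ℝ) := by linarith
  -- 2^{-B} ≤ ε²/2
  have hpow : (2:ℝ)^(-B) ≤ ε^2/2 := by
    have hrp : 1/ε ≤ (2:ℝ)^(b:ℝ) := by
      have h1 : Real.logb 2 (1/ε) ≤ (b:ℝ) := Int.le_ceil _
      calc 1/ε = (2:ℝ)^(Real.logb 2 (1/ε)) :=
            (Real.rpow_logb (by norm_num) (by norm_num) (by positivity)).symm
        _ ≤ (2:ℝ)^(b:ℝ) := Real.rpow_le_rpow_left_iff (by norm_num) |>.mpr h1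
    have h1 : (2:ℝ)^(b:ℝ) = (2:ℝ)^b := by rw [← Real.rpow_intCast]
    have hp : (0:ℝ) < (2:ℝ)^b := by positivity
    have h2 : 1 ≤ ε * (2:ℝ)^b := by
      rw [div_le_iff₀ hε0] at hrp; linarith [h1 ▸ hrp]
    have h3 : (2:ℝ)^(2*b+1) = 2^b*2^b*2 := by
      rw [zpow_add₀ two_ne_zero, two_mul, zpow_add₀ two_ne_zero]; norm_num
    have h4 : (2:ℝ)^(-(2*b+1) : ℤ) = 1/(2^b*2^b*2) := by rw [zpow_neg, h3]; ring
    rw [hBeq, h4, div_le_div_iff₀ (by positivity) (by norm_num)]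
    nlinarith [mul_le_mul h2 h2 (by norm_num) (by positivity : (0:ℝ) ≤ ε * 2^b)]
  -- membership
  have hmem : ∀ i : ℤ, i ∈ Iset ε ↔ (-B ≤ i ∧ i ≤ B ∧ i % 2 = 1) := by
    intro i
    simp [Iset, Finset.mem_filter, Finset.mem_Icc, Int.odd_iff, ← hBdef]
    tauto
  have hmapsdn : ∀ j ∈ Iset ε, max (j-2) (-B) ∈ Iset ε := by
    intro j hj; rw [hmem] at hj ⊢; omega
  have hmapsup : ∀ j ∈ Iset ε, min (j+2) B ∈ Iset ε := by
    intro j hj; rw [hmem] at hj ⊢; omega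
  -- nonnegativity of p
  have hp_nonneg : ∀ s i, 0 ≤ P.p s i :=
    fun s i => le_trans (P.q_nonneg s i) (P.q_le_p s i)
  -- mass conservation
  have masscons : ∀ s : ℕ, 1 ≤ s → (∑ i ∈ Iset ε, P.p s i) = 1 := by
    intro s hs
    induction s, hs using Nat.le_induction with
    | base => exact hmass
    | succ n hn ih =>
      rw [Finset.sum_congr rfl (fun i hi => P.update n hn i hi),
        Finset.sum_add_distrib,
        Finset.sum_fiberwise_of_maps_to hmapsdn,
        Finset.sum_fiberwise_of_maps_to hmapsup,
        ← Finset.sum_add_distrib]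
      simpa using ih
  -- abbreviations
  set S : ℝ := ∑ i ∈ Ipos ε, P.p t i with hSdef
  have hS0 : 0 ≤ S := Finset.sum_nonneg fun i _ => hp_nonneg t i
  have hWrw : ∀ s : ℕ, Wfun ε P s = ∑ i ∈ Iset ε, phiW i * P.p s i := by
    intro s
    have hsplit := Finset.sum_filter_add_sum_filter_not (Iset ε)
      (fun i => i < 0) (fun i => phiW i * P.p s i)
    rw [← hsplit]
    unfold Wfun
    congr 1
    · apply Finset.sum_congr rfl
      intro i hi
      rw [Ineg] at hi
      rw [phiW_neg i (Finset.mem_filter.mp hi).2]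
    · rw [show Ipos ε = (Iset ε).filter (fun i => ¬ i < 0) from ?_]
      · apply Finset.sum_congr rfl
        intro i hi
        have hi2 := Finset.mem_filter.mp hi
        have : 0 < i := by
          have := (hmem i).mp hi2.1
          omega
        rw [phiW_pos' i this, one_mul]
      · unfold Ipos
        apply Finset.filter_congr
        intro i hi
        have := (hmem i).mp hi
        constructor <;> intro <;> omega
  have hW0 : 0 ≤ Wfun ε P t := by
    rw [hWrw]
    exact Finset.sum_nonneg fun i _ =>
      mul_nonneg (phiW_pos i).le (hp_nonneg t i)
  have hSleW : S ≤ Wfun ε P t := by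
    unfold Wfun
    have : 0 ≤ ∑ i ∈ Ineg ε, (2:ℝ)^i * P.p t i :=
      Finset.sum_nonneg fun i _ => mul_nonneg (by positivity) (hp_nonneg t i)
    rw [← hSdef]; linarith
  -- p t (-B) ≤ 1
  have hmB : -B ∈ Iset ε := by rw [hmem]; omega
  have hpB1 : P.p t (-B) ≤ 1 := by
    rw [← masscons t ht]
    exact Finset.single_le_sum (fun i _ => hp_nonneg t i) hmB
  -- excess function
  set E : ℤ → ℝ := fun j => if j = -B then 2*ε else if j < 0 then (3/2)*(S/(B:ℝ)^4) else 0
    with hEdef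
  have hc0 : 0 ≤ (3/2)*(S/(B:ℝ)^4) := by positivity
  -- the per-source bound
  have key : ∀ j ∈ Iset ε,
      phiW (max (j-2) (-B)) * P.q t j + phiW (min (j+2) B) * (P.p t j - P.q t j)
        ≤ phiW j * P.p t j + E j := by
    intro j hj
    have hjm := (hmem j).mp hj
    have hq0 := P.q_nonneg t j
    have hqp := P.q_le_p t j
    have hp0 := hp_nonneg t j
    rcases lt_trichotomy j 0 with hjneg | hj0 | hjpos
    · -- negative
      by_cases hjB : j = -B
      · -- j = -B
        subst hjB
        have hdn : max (-B-2) (-B) = -B := by omega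
        have hup : min (-B+2) B = -B+2 := by omega
        rw [hdn, hup, phiW_neg _ (by omega), phiW_neg _ (by omega),
          show E (-B) = 2*ε from if_pos rfl]
        have h4 : (2:ℝ)^(-B+2) = 4*(2:ℝ)^(-B) := by
          rw [zpow_add₀ two_ne_zero]; norm_num; ring
        rw [h4]
        have hbp : (0:ℝ) < (2:ℝ)^(-B) := by positivity
        have hble : (2:ℝ)^(-B) ≤ ε^2/2 := hpow
        have e1 : (2:ℝ)^(-B)*(P.p t (-B)) ≤ (2:ℝ)^(-B)*1 :=
          mul_le_mul_of_nonneg_left hpB1 hbp.le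
        have e2 : ε*ε ≤ 1*ε := mul_le_mul_of_nonneg_right hε1.le hε0.le
        have e0 : 0 ≤ (2:ℝ)^(-B)*(P.q t (-B)) := mul_nonneg hbp.le (P.q_nonneg t (-B))
        nlinarith [e1, e2, e0, hble]
      · -- -B < j < 0
        have hdn : max (j-2) (-B) = j - 2 := by omega
        have hup : min (j+2) B = j + 2 := by omega
        have hEj : E j = (3/2)*(S/(B:ℝ)^4) := by
          rw [hEdef]; simp only; rw [if_neg hjB, if_pos hjneg]
        have hphidn : phiW (j-2) = (2:ℝ)^j/4 := by
          rw [phiW_neg _ (by omega), zpow_sub₀ two_ne_zero]; norm_num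
        have hphiup : phiW (j+2) ≤ 4*(2:ℝ)^j := by
          by_cases h1 : j + 2 < 0
          · rw [phiW_neg _ h1, zpow_add₀ two_ne_zero]; norm_num; linarith
          · have : j = -1 := by omega
            subst this
            rw [phiW_pos' _ (by norm_num)]
            norm_num
        have h2jp : (0:ℝ) < (2:ℝ)^j := by positivity
        have h2jle : (2:ℝ)^j ≤ 1/2 := by
          calc (2:ℝ)^j ≤ (2:ℝ)^(-1:ℤ) := zpow_le_zpow_right₀ one_le_two (by omega)
            _ = 1/2 := by norm_num
        rw [hdn, hup, hphidn, hEj, phiW_neg _ hjneg]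
        have hub : phiW (j+2) * (P.p t j - P.q t j) ≤ 4*(2:ℝ)^j * (P.p t j - P.q t j) :=
          mul_le_mul_of_nonneg_right hphiup (by linarith)
        rcases le_or_gt ((1/(B:ℝ)^4) * S) (P.p t j) with hbig | hsmall
        · have hjIneg : j ∈ Ineg ε := Finset.mem_filter.mpr ⟨hj, hjneg⟩
          have hus := P.up_small t ht j hjIneg hbig
          have e1 : (2:ℝ)^j*(P.p t j - P.q t j) ≤ (2:ℝ)^j*((1/16)*P.p t j) :=
            mul_le_mul_of_nonneg_left hus h2jp.le
          have e2 : (2:ℝ)^j/4*(P.q t j) ≤ (2:ℝ)^j/4*(P.p t j) :=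
            mul_le_mul_of_nonneg_left hqp (by positivity)
          have e3 : 0 ≤ (2:ℝ)^j * P.p t j := mul_nonneg h2jp.le hp0
          linarith [hub, e1, e2, e3, hc0]
        · have hsm : P.p t j ≤ S/(B:ℝ)^4 := by
            rw [one_div, inv_mul_eq_div] at hsmall
            linarith
          have e3 : (2:ℝ)^j * P.p t j ≤ (1/2)*P.p t j :=
            mul_le_mul_of_nonneg_right h2jle hp0
          have e4 : 0 ≤ (2:ℝ)^j * P.q t j := mul_nonneg h2jp.le hq0
          linarith [hub, e3, e4, hsm]
    · omega
    · -- positive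
      have hEj : E j = 0 := by
        rw [hEdef]; simp only; rw [if_neg (by omega), if_neg (by omega)]
      have hup : phiW (min (j+2) B) = 1 := phiW_pos' _ (by omega)
      rw [hEj, hup, phiW_pos' j hjpos, add_zero, one_mul, one_mul]
      have e1 : phiW (max (j-2) (-B)) * P.q t j ≤ 1 * P.q t j :=
        mul_le_mul_of_nonneg_right (phiW_le_one _) hq0
      linarith
  -- card of Ineg
  have hcard : ((Ineg ε).card : ℝ) ≤ (b:ℝ) + 1 := by
    have h1 : (Ineg ε).card ≤ (Finset.Icc (0:ℤ) b).card := by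
      apply Finset.card_le_card_of_injOn (fun i => (-i-1)/2)
      · intro i hi
        have hi2 := Finset.mem_filter.mp hi
        have hm := (hmem i).mp hi2.1
        have hin : i < 0 := hi2.2
        simp only [Finset.mem_coe, Finset.mem_Icc]
        omega
      · intro i hi i' hi' hee
        have h1 := (hmem i).mp (Finset.mem_filter.mp hi).1
        have h2 := (hmem i').mp (Finset.mem_filter.mp hi').1
        simp only at hee
        omega
    have h2 : (Finset.Icc (0:ℤ) b).card = b.toNat + 1 := by
      rw [Int.card_Icc]; omega
    have h3 : ((Ineg ε).card : ℝ) ≤ ((Finset.Icc (0:ℤ) b).card : ℝ) := by exact_mod_cast h1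
    rw [h2] at h3
    have hbt : ((b.toNat : ℕ) : ℝ) = (b : ℝ) := by
      have h := Int.toNat_of_nonneg (show (0:ℤ) ≤ b by omega)
      exact_mod_cast congrArg (fun z : ℤ => (z : ℝ)) h
    push_cast at h3
    linarith
  clear_value B b S E
  -- sum of excesses
  set c : ℝ := (3/2)*(S/(B:ℝ)^4) with hcdef
  have hEsum : (∑ j ∈ Iset ε, E j) ≤ 2*ε + (1/(B:ℝ)^3) * S := by
    have hstep : ∀ j ∈ Iset ε,
        E j ≤ (if j = -B then 2*ε else 0) + (if j < 0 then c else 0) := by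
      intro j _
      rw [hEdef]
      simp only
      split_ifs <;> linarith
    have h4 : (∑ j ∈ Iset ε, E j) ≤ 2*ε + ((Ineg ε).card : ℝ) * c := by
      calc (∑ j ∈ Iset ε, E j)
          ≤ ∑ j ∈ Iset ε, ((if j = -B then 2*ε else 0) + (if j < 0 then c else 0)) :=
            Finset.sum_le_sum hstep
        _ = (∑ j ∈ Iset ε, (if j = -B then 2*ε else 0))
            + (∑ j ∈ Iset ε, (if j < 0 then c else 0)) := Finset.sum_add_distrib
        _ = 2*ε + ((Ineg ε).card : ℝ) * c := by
            congr 1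
            · rw [Finset.sum_ite_eq' (Iset ε) (-B) (fun _ => 2*ε), if_pos hmB]
            · rw [← Finset.sum_filter]
              rw [show (Iset ε).filter (fun j => j < 0) = Ineg ε from rfl]
              rw [Finset.sum_const, nsmul_eq_mul]
    have h5 : ((Ineg ε).card : ℝ) * c ≤ (1/(B:ℝ)^3) * S := by
      have h6 : ((Ineg ε).card : ℝ) * c ≤ ((b:ℝ)+1) * c :=
        mul_le_mul_of_nonneg_right (by linarith [hcard]) hc0
      have h7 : ((b:ℝ)+1) * c ≤ (1/(B:ℝ)^3) * S := by
        rw [hcdef]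
        have hBb : (B:ℝ) = 2*(b:ℝ)+1 := by rw [hBeq]; push_cast; ring
        have h8 : (3/2)*((b:ℝ)+1) ≤ (B:ℝ) := by rw [hBb]; linarith [show (1:ℝ) ≤ (b:ℝ) by exact_mod_cast hb1]
        have h9 : (0:ℝ) ≤ S/(B:ℝ)^4 := by positivity
        have h10 : ((b:ℝ)+1) * ((3/2)*(S/(B:ℝ)^4)) = ((3/2)*((b:ℝ)+1)) * (S/(B:ℝ)^4) := by ring
        rw [h10]
        calc ((3/2)*((b:ℝ)+1)) * (S/(B:ℝ)^4) ≤ (B:ℝ) * (S/(B:ℝ)^4) :=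
              mul_le_mul_of_nonneg_right h8 h9
          _ = (1/(B:ℝ)^3) * S := by field_simp
      linarith
    linarith
  -- the fiberwise rewrite of W_{t+1}
  have hfib : Wfun ε P (t+1) =
      (∑ j ∈ Iset ε, phiW (max (j-2) (-B)) * P.q t j)
      + (∑ j ∈ Iset ε, phiW (min (j+2) B) * (P.p t j - P.q t j)) := by
    rw [hWrw]
    rw [Finset.sum_congr rfl (fun i hi => by rw [P.update t ht i hi, mul_add])]
    rw [Finset.sum_add_distrib]
    congr 1
    · rw [← Finset.sum_fiberwise_of_maps_to hmapsdn (fun j => phiW (max (j-2) (-B)) * P.q t j)]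
      apply Finset.sum_congr rfl
      intro i _
      rw [Finset.mul_sum]
      apply Finset.sum_congr (by simp only [← hBdef]) (fun j hj => ?_)
      rw [(Finset.mem_filter.mp hj).2]
    · rw [← Finset.sum_fiberwise_of_maps_to hmapsup (fun j => phiW (min (j+2) B) * (P.p t j - P.q t j))]
      apply Finset.sum_congr rfl
      intro i _
      rw [Finset.mul_sum]
      apply Finset.sum_congr (by simp only [← hBdef]) (fun j hj => ?_)
      rw [(Finset.mem_filter.mp hj).2]
  -- put it together
  have hmain : Wfun ε P (t+1) ≤ Wfun ε P t + (2*ε + (1/(B:ℝ)^3) * S) := by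
    rw [hfib, ← Finset.sum_add_distrib]
    calc (∑ j ∈ Iset ε, (phiW (max (j-2) (-B)) * P.q t j
            + phiW (min (j+2) B) * (P.p t j - P.q t j)))
        ≤ ∑ j ∈ Iset ε, (phiW j * P.p t j + E j) := Finset.sum_le_sum key
      _ = (∑ j ∈ Iset ε, phiW j * P.p t j) + (∑ j ∈ Iset ε, E j) := Finset.sum_add_distrib
      _ ≤ Wfun ε P t + (2*ε + (1/(B:ℝ)^3) * S) := by
          rw [← hWrw]
          linarith [hEsum]
  have hlast : (1/(B:ℝ)^3) * S ≤ (1/(B:ℝ)^3) * Wfun ε P t :=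
    mul_le_mul_of_nonneg_left hSleW (by positivity)
  have : (1 + 1/(B:ℝ)^3) * Wfun ε P t = Wfun ε P t + (1/(B:ℝ)^3) * Wfun ε P t := by ring
  linarith
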